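/- Let g : ℝ^d → ℝ^m be componentwise positive, let Ω be the unit simplex in ℝ^m, and define G(x,w) = max_{k=1,…,m} w_k g_k(x). Assume that for every w ∈ Ω the scalar problem min_{x ∈ ℝ^d} G(x,w) attains a unique global minimizer. If x̄ ∈ ℝ^d is Edgeworth–Pareto optimal (there is no x with g_k(x) ≤ g_k(x̄) for all k and g(x) ≠ g(x̄)), then there exists w ∈ Ω such that x̄ is the (unique) global minimizer of x ↦ G(x,w). -/

import Mathlib

open Finset

/-- Chebyshev scalarization `G(x,w) = max_k w_k * g_k(x)` (for componentwise
positive `g` this equals `max_k w_k * |g_k(x)|`). -/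
noncomputable def chebyshevScalarization {d m : ℕ} [NeZero m]
    (g : (Fin d → ℝ) → Fin m → ℝ) (x : Fin d → ℝ) (w : Fin m → ℝ) : ℝ :=
  Finset.univ.sup' Finset.univ_nonempty (fun k => w k * g x k)

/-- If every Chebyshev sub-problem (with weight in the unit simplex) attains a
unique global minimizer, then every (strongly) Edgeworth–Pareto optimal point
`xb` is the unique global minimizer of `G(·,w)` for some weight `w` in the
unit simplex. -/
theorem EP_optimal_is_unique_chebyshev_minimizer
    {d m : ℕ} [NeZero m] (g : (Fin d → ℝ) → Fin m → ℝ)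
    (hg : ∀ x k, 0 < g x k)
    (huniq : ∀ w : Fin m → ℝ, (∀ k, 0 ≤ w k) → (∑ k, w k = 1) →
      ∃! x : Fin d → ℝ, ∀ y : Fin d → ℝ,
        chebyshevScalarization g x w ≤ chebyshevScalarization g y w)
    (xb : Fin d → ℝ)
    (hEP : ¬ ∃ x : Fin d → ℝ, (∀ k, g x k ≤ g xb k) ∧ g x ≠ g xb) :
    ∃ w : Fin m → ℝ,
      (∀ k, 0 ≤ w k) ∧ (∑ k, w k = 1) ∧
      (∀ y : Fin d → ℝ,
        chebyshevScalarization g xb w ≤ chebyshevScalarization g y w) ∧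
      (∀ x : Fin d → ℝ,
        (∀ y : Fin d → ℝ,
          chebyshevScalarization g x w ≤ chebyshevScalarization g y w) → x = xb) := by
  set s : ℝ := ∑ k, (g xb k)⁻¹ with hs
  have hspos : 0 < s :=
    Finset.sum_pos (fun k _ => inv_pos.2 (hg xb k)) Finset.univ_nonempty
  set w : Fin m → ℝ := fun k => (g xb k)⁻¹ / s with hw
  have hwpos : ∀ k, 0 < w k := fun k => div_pos (inv_pos.2 (hg xb k)) hspos
  have hsum : ∑ k, w k = 1 := by
    simp only [hw]
    rw [← Finset.sum_div, ← hs, div_self hspos.ne']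
  have hval : ∀ k, w k * g xb k = s⁻¹ := by
    intro k
    have hk := (hg xb k).ne'
    simp only [hw]
    rw [div_mul_eq_mul_div, inv_mul_cancel₀ hk, one_div]
  have hGxb : chebyshevScalarization g xb w = s⁻¹ := by
    unfold chebyshevScalarization
    rw [Finset.sup'_congr Finset.univ_nonempty rfl (fun k _ => hval k)]
    exact Finset.sup'_const _ _
  -- xb is a global minimizer
  have hmin : ∀ y, chebyshevScalarization g xb w ≤ chebyshevScalarization g y w := by
    intro y
    by_contra hlt
    push_neg at hlt
    rw [hGxb] at hlt
    have hdom : ∀ k, g y k < g xb k := by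
      intro k
      have h1 : w k * g y k ≤ chebyshevScalarization g y w :=
        Finset.le_sup' (fun k => w k * g y k) (Finset.mem_univ k)
      have h2 : w k * g y k < w k * g xb k := by
        rw [hval k]; exact lt_of_le_of_lt h1 hlt
      exact lt_of_mul_lt_mul_left h2 (hwpos k).le
    refine hEP ⟨y, fun k => (hdom k).le, ?_⟩
    intro heq
    have k0 : Fin m := ⟨0, Nat.pos_of_ne_zero (NeZero.ne m)⟩
    exact absurd (congrFun heq k0) (hdom k0).ne
  obtain ⟨xs, _, hxsuniq⟩ := huniq w (fun k => (hwpos k).le) hsum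
  have hxb : xb = xs := hxsuniq xb hmin
  exact ⟨w, fun k => (hwpos k).le, hsum, hmin,
    fun x hx => (hxsuniq x hx).trans hxb.symm⟩
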